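/- Let A ∈ ℝ^{m×n} have full column rank, p ∈ (0, 2], ε > 0, and let w, z ∈ ℝ^m be entrywise positive with w ≈_ε σ(diag(w)^{1/2-1/p} A) + z. Let τ(A) ∈ ℝ^m be the (unique) entrywise-positive solution of the fixed-point equation τ = σ(diag(τ)^{1/2-1/p} A) + z (the z-regularized ℓ_p Lewis weights). Then w ≈_ε τ(A). -/

import Mathlib

open Matrix

/-- `u ≈_δ v`: entrywise `e^{-δ} v ≤ u ≤ e^{δ} v`. -/
def Approx {m : ℕ} (δ : ℝ) (u v : Fin m → ℝ) : Prop :=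
  ∀ i, Real.exp (-δ) * v i ≤ u i ∧ u i ≤ Real.exp δ * v i

/-- Leverage scores `σ(M)_i = (M (MᵀM)⁻¹ Mᵀ)_{ii}`. -/
noncomputable def lev {m n : ℕ} (M : Matrix (Fin m) (Fin n) ℝ) : Fin m → ℝ :=
  fun i => (M * (Mᵀ * M)⁻¹ * Mᵀ) i i

/-- The row-rescaled matrix `W^{1/2 - 1/p} A` for `W = diag w`. -/
noncomputable def scaled {m n : ℕ} (w : Fin m → ℝ) (p : ℝ)
    (A : Matrix (Fin m) (Fin n) ℝ) : Matrix (Fin m) (Fin n) ℝ :=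
  Matrix.diagonal (fun i => w i ^ ((1:ℝ)/2 - 1/p)) * A

section Aux

lemma aux_quad_lb {n : ℕ} {M : Matrix (Fin n) (Fin n) ℝ} (hM : M.PosDef)
    (a x : Fin n → ℝ) :
    2 * (a ⬝ᵥ x) - x ⬝ᵥ M *ᵥ x ≤ a ⬝ᵥ M⁻¹ *ᵥ a := by
  have hdet : IsUnit M.det := hM.det_pos.ne'.isUnit
  set t := M⁻¹ *ᵥ a with ht
  have hMt : M *ᵥ t = a := by
    rw [ht, mulVec_mulVec, Matrix.mul_nonsing_inv _ hdet, one_mulVec]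
  have hsymm : Mᵀ = M := by
    have := hM.isHermitian.eq
    rwa [conjTranspose_eq_transpose_of_trivial] at this
  have h1 : t ⬝ᵥ M *ᵥ x = a ⬝ᵥ x := by
    rw [dotProduct_mulVec, ← mulVec_transpose, hsymm, hMt]
  have h2 : x ⬝ᵥ M *ᵥ t = a ⬝ᵥ x := by
    rw [hMt, dotProduct_comm]
  have h3 : t ⬝ᵥ M *ᵥ t = a ⬝ᵥ M⁻¹ *ᵥ a := by
    rw [hMt, dotProduct_comm, ht]
  have h0 : 0 ≤ (x - t) ⬝ᵥ M *ᵥ (x - t) := by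
    rcases eq_or_ne (x - t) 0 with h | h
    · simp [h]
    · have := hM.dotProduct_mulVec_pos h
      simpa using this.le
  rw [mulVec_sub, dotProduct_sub, sub_dotProduct, sub_dotProduct] at h0
  rw [h1, h2, h3] at h0
  linarith

lemma aux_inv_quad_le {n : ℕ} {M N : Matrix (Fin n) (Fin n) ℝ} (hM : M.PosDef) (hN : N.PosDef)
    {k : ℝ} (hk : 0 < k) (h : ∀ x, x ⬝ᵥ M *ᵥ x ≤ k * (x ⬝ᵥ N *ᵥ x)) (a : Fin n → ℝ) :
    a ⬝ᵥ N⁻¹ *ᵥ a ≤ k * (a ⬝ᵥ M⁻¹ *ᵥ a) := by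
  set y := N⁻¹ *ᵥ a with hy
  have hNy : N *ᵥ y = a := by
    rw [hy, mulVec_mulVec, Matrix.mul_nonsing_inv _ hN.det_pos.ne'.isUnit, one_mulVec]
  have h1 := aux_quad_lb hM a (k⁻¹ • y)
  have h2 := h y
  have hyNy : y ⬝ᵥ N *ᵥ y = a ⬝ᵥ y := by rw [hNy, dotProduct_comm]
  rw [hyNy] at h2
  have e1 : a ⬝ᵥ (k⁻¹ • y) = k⁻¹ * (a ⬝ᵥ y) := by simp
  have e2 : (k⁻¹ • y) ⬝ᵥ M *ᵥ (k⁻¹ • y) = k⁻¹ * (k⁻¹ * (y ⬝ᵥ M *ᵥ y)) := by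
    rw [mulVec_smul, smul_dotProduct, dotProduct_smul]; simp [mul_assoc]
  rw [e1, e2] at h1
  have hk' : (0:ℝ) < k⁻¹ := by positivity
  have h3 : k⁻¹ * (k⁻¹ * (y ⬝ᵥ M *ᵥ y)) ≤ k⁻¹ * (k⁻¹ * (k * (a ⬝ᵥ y))) :=
    mul_le_mul_of_nonneg_left (mul_le_mul_of_nonneg_left h2 hk'.le) hk'.le
  have h4 : k⁻¹ * (k⁻¹ * (k * (a ⬝ᵥ y))) = k⁻¹ * (a ⬝ᵥ y) := by
    rw [inv_mul_cancel_left₀ hk.ne']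
  have h5 : k⁻¹ * (a ⬝ᵥ y) ≤ a ⬝ᵥ M⁻¹ *ᵥ a := by linarith
  calc a ⬝ᵥ y = k * (k⁻¹ * (a ⬝ᵥ y)) := by rw [mul_inv_cancel_left₀ hk.ne']
    _ ≤ k * (a ⬝ᵥ M⁻¹ *ᵥ a) := mul_le_mul_of_nonneg_left h5 hk.le

lemma aux_quadForm_eq {m n : ℕ} (A : Matrix (Fin m) (Fin n) ℝ) (d : Fin m → ℝ) (x : Fin n → ℝ) :
    x ⬝ᵥ (Aᵀ * Matrix.diagonal d * A) *ᵥ x = ∑ j, d j * (A *ᵥ x) j ^ 2 := by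
  rw [← mulVec_mulVec, ← mulVec_mulVec, dotProduct_mulVec, ← mulVec_transpose,
    transpose_transpose]
  simp only [dotProduct, mulVec_diagonal]
  exact Finset.sum_congr rfl fun j _ => by ring

lemma aux_entry_eq {m n : ℕ} (A : Matrix (Fin m) (Fin n) ℝ) (X : Matrix (Fin n) (Fin n) ℝ)
    (i : Fin m) : (A * X * Aᵀ) i i = A i ⬝ᵥ X *ᵥ A i := by
  simp only [mul_apply, dotProduct, Matrix.mulVec, transpose_apply, dotProduct,
    Finset.sum_mul, Finset.mul_sum]
  rw [Finset.sum_comm]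
  exact Finset.sum_congr rfl fun j _ => Finset.sum_congr rfl fun k _ => by ring

lemma aux_B_posdef {m n : ℕ} (A : Matrix (Fin m) (Fin n) ℝ)
    (hinj : ∀ x, A *ᵥ x = 0 → x = 0) (d : Fin m → ℝ) (hd : ∀ i, 0 < d i) :
    (Aᵀ * Matrix.diagonal d * A).PosDef := by
  refine Matrix.PosDef.of_dotProduct_mulVec_pos ?_ ?_
  · have h : (Matrix.diagonal d).IsHermitian := by
      rw [Matrix.IsHermitian, conjTranspose_eq_transpose_of_trivial, diagonal_transpose]
    have := isHermitian_conjTranspose_mul_mul A h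
    simpa [conjTranspose_eq_transpose_of_trivial] using this
  · intro x hx
    have hstar : star x = x := rfl
    rw [hstar, aux_quadForm_eq]
    have hAx : A *ᵥ x ≠ 0 := fun h => hx (hinj x h)
    obtain ⟨j, hj⟩ := Function.ne_iff.mp hAx
    apply Finset.sum_pos' (fun j _ => mul_nonneg (hd j).le (sq_nonneg _))
    exact ⟨j, Finset.mem_univ j,
      mul_pos (hd j) (lt_of_le_of_ne (sq_nonneg _) (Ne.symm (pow_ne_zero 2 hj)))⟩

lemma aux_rank_inj {m n : ℕ} (A : Matrix (Fin m) (Fin n) ℝ) (hrank : A.rank = n) :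
    ∀ x, A *ᵥ x = 0 → x = 0 := by
  have h1 : LinearMap.ker A.mulVecLin = ⊥ := by
    have h2 := LinearMap.finrank_range_add_finrank_ker A.mulVecLin
    rw [show Module.finrank ℝ (LinearMap.range A.mulVecLin) = A.rank from rfl, hrank] at h2
    have h3 : Module.finrank ℝ (Fin n → ℝ) = n := by simp
    rw [h3] at h2
    have h4 : Module.finrank ℝ (LinearMap.ker A.mulVecLin) = 0 := by omega
    exact Submodule.finrank_eq_zero.mp h4
  intro x hx
  have : x ∈ LinearMap.ker A.mulVecLin := hx
  rwa [h1, Submodule.mem_bot] at this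

lemma aux_scaled_gram {m n : ℕ} (A : Matrix (Fin m) (Fin n) ℝ) (p : ℝ) (u : Fin m → ℝ)
    (hu : ∀ i, 0 < u i) :
    (scaled u p A)ᵀ * scaled u p A
      = Aᵀ * Matrix.diagonal (fun j => u j ^ ((1:ℝ) - 2/p)) * A := by
  have hfun : (fun j => u j ^ ((1:ℝ)/2 - 1/p) * u j ^ ((1:ℝ)/2 - 1/p))
      = fun j => u j ^ ((1:ℝ) - 2/p) := by
    funext j
    rw [← Real.rpow_add (hu j)]
    congr 1
    ring
  rw [scaled, transpose_mul, diagonal_transpose, Matrix.mul_assoc,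
    ← Matrix.mul_assoc (Matrix.diagonal _) (Matrix.diagonal _) A,
    diagonal_mul_diagonal, hfun, ← Matrix.mul_assoc]

lemma aux_lev_eq {m n : ℕ} (A : Matrix (Fin m) (Fin n) ℝ) (p : ℝ) (u : Fin m → ℝ)
    (hu : ∀ i, 0 < u i) (i : Fin m) :
    lev (scaled u p A) i = u i ^ ((1:ℝ) - 2/p) *
      (A i ⬝ᵥ (Aᵀ * Matrix.diagonal (fun j => u j ^ ((1:ℝ) - 2/p)) * A)⁻¹ *ᵥ A i) := by
  rw [lev, aux_scaled_gram A p u hu]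
  set X := (Aᵀ * Matrix.diagonal (fun j => u j ^ ((1:ℝ) - 2/p)) * A)⁻¹ with hX
  set D := Matrix.diagonal (fun i => u i ^ ((1:ℝ)/2 - 1/p)) with hD
  have h1 : scaled u p A * X * (scaled u p A)ᵀ = D * (A * X * Aᵀ) * D := by
    rw [scaled, transpose_mul, diagonal_transpose, ← hD]
    simp [Matrix.mul_assoc]
  rw [h1, hD]
  rw [show (Matrix.diagonal (fun i => u i ^ ((1:ℝ)/2 - 1/p)) * (A * X * Aᵀ) *
      Matrix.diagonal (fun i => u i ^ ((1:ℝ)/2 - 1/p))) i i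
      = u i ^ ((1:ℝ)/2 - 1/p) * (A * X * Aᵀ) i i * u i ^ ((1:ℝ)/2 - 1/p) by
    rw [mul_diagonal, diagonal_mul]]
  rw [aux_entry_eq]
  rw [show u i ^ ((1:ℝ)/2 - 1/p) * (A i ⬝ᵥ X *ᵥ A i) * u i ^ ((1:ℝ)/2 - 1/p)
      = (u i ^ ((1:ℝ)/2 - 1/p) * u i ^ ((1:ℝ)/2 - 1/p)) * (A i ⬝ᵥ X *ᵥ A i) by ring]
  rw [← Real.rpow_add (hu i)]
  congr 2
  ring

end Aux

theorem stmt_5 {m n : ℕ} (A : Matrix (Fin m) (Fin n) ℝ)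
    (hrank : A.rank = n)
    (p : ℝ) (hp : p ∈ Set.Ioc (0:ℝ) 2) (ε : ℝ) (hε : 0 < ε)
    (w z : Fin m → ℝ) (hw : ∀ i, 0 < w i) (hz : ∀ i, 0 < z i)
    (hw_apx : Approx ε w (fun i => lev (scaled w p A) i + z i))
    (τ : Fin m → ℝ) (hτpos : ∀ i, 0 < τ i)
    (hτ : ∀ i, τ i = lev (scaled τ p A) i + z i) :
    Approx ε w τ := by
  rcases Nat.eq_zero_or_pos m with hm | hm
  · subst hm; intro i; exact i.elim0
  have hFm : Nonempty (Fin m) := ⟨⟨0, hm⟩⟩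
  obtain ⟨hp0, hp2⟩ := hp
  have hinj := aux_rank_inj A hrank
  have h2p : (1:ℝ) ≤ 2/p := by rw [le_div_iff₀ hp0]; linarith
  have h2p0 : (0:ℝ) < 2/p := by positivity
  -- the sup of log-ratios
  set L : Fin m → ℝ := fun i => |Real.log (w i) - Real.log (τ i)| with hL
  have hne : (Finset.univ : Finset (Fin m)).Nonempty := Finset.univ_nonempty
  set δ : ℝ := Finset.univ.sup' hne L with hδ
  have hδub : ∀ i, L i ≤ δ := fun i => Finset.le_sup' L (Finset.mem_univ i)
  have hδ0 : 0 ≤ δ := le_trans (abs_nonneg _) (hδub (Classical.arbitrary _))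
  have hwle : ∀ i, w i ≤ Real.exp δ * τ i := by
    intro i
    have h := (abs_le.mp (hδub i)).2
    calc w i = Real.exp (Real.log (w i)) := (Real.exp_log (hw i)).symm
      _ ≤ Real.exp (δ + Real.log (τ i)) := Real.exp_le_exp.mpr (by linarith)
      _ = Real.exp δ * τ i := by rw [Real.exp_add, Real.exp_log (hτpos i)]
  have hwge : ∀ i, Real.exp (-δ) * τ i ≤ w i := by
    intro i
    have h := (abs_le.mp (hδub i)).1
    calc Real.exp (-δ) * τ i = Real.exp (-δ + Real.log (τ i)) := by
          rw [Real.exp_add, Real.exp_log (hτpos i)]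
      _ ≤ Real.exp (Real.log (w i)) := Real.exp_le_exp.mpr (by linarith)
      _ = w i := Real.exp_log (hw i)
  have hτle : ∀ i, τ i ≤ Real.exp δ * w i := by
    intro i
    have h := mul_le_mul_of_nonneg_left (hwge i) (Real.exp_pos δ).le
    calc τ i = Real.exp δ * (Real.exp (-δ) * τ i) := by
          rw [← mul_assoc, ← Real.exp_add]; simp
      _ ≤ Real.exp δ * w i := h
  set γ : ℝ := (2/p - 1) * δ with hγ
  have hγ0 : 0 ≤ γ := mul_nonneg (by linarith) hδ0
  -- entrywise rpow comparisons, exponent c = 1 - 2/p ≤ 0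
  have hcle : (1:ℝ) - 2/p ≤ 0 := by linarith
  have hrpow_cmp : ∀ (u v : Fin m → ℝ), (∀ j, 0 < u j) → (∀ j, 0 < v j) →
      (∀ j, Real.exp (-δ) * v j ≤ u j) →
      ∀ j, u j ^ ((1:ℝ) - 2/p) ≤ Real.exp γ * v j ^ ((1:ℝ) - 2/p) := by
    intro u v hu hv hle j
    have h0 : 0 < Real.exp (-δ) * v j := mul_pos (Real.exp_pos _) (hv j)
    have h1 : u j ^ ((1:ℝ) - 2/p) ≤ (Real.exp (-δ) * v j) ^ ((1:ℝ) - 2/p) :=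
      Real.rpow_le_rpow_of_nonpos h0 (hle j) hcle
    have h2 : (Real.exp (-δ) * v j) ^ ((1:ℝ) - 2/p)
        = Real.exp γ * v j ^ ((1:ℝ) - 2/p) := by
      rw [Real.mul_rpow (Real.exp_pos _).le (hv j).le, ← Real.exp_mul]
      congr 2
      rw [hγ]; ring
    rw [h2] at h1
    exact h1
  have hwc_le : ∀ j, w j ^ ((1:ℝ) - 2/p) ≤ Real.exp γ * τ j ^ ((1:ℝ) - 2/p) :=
    hrpow_cmp w τ hw hτpos hwge
  have hτc_le : ∀ j, τ j ^ ((1:ℝ) - 2/p) ≤ Real.exp γ * w j ^ ((1:ℝ) - 2/p) := by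
    apply hrpow_cmp τ w hτpos hw
    intro j
    have := hwle j
    calc Real.exp (-δ) * w j ≤ Real.exp (-δ) * (Real.exp δ * τ j) :=
          mul_le_mul_of_nonneg_left this (Real.exp_pos _).le
      _ = τ j := by rw [← mul_assoc, ← Real.exp_add]; simp
  -- positive-exponent comparisons for 2/p - 1 ≥ 0
  have hnc0 : (0:ℝ) ≤ 2/p - 1 := by linarith
  have hrpow_cmp' : ∀ (u v : Fin m → ℝ), (∀ j, 0 < u j) → (∀ j, 0 < v j) →
      (∀ j, u j ≤ Real.exp δ * v j) →
      ∀ j, u j ^ ((2:ℝ)/p - 1) ≤ Real.exp γ * v j ^ ((2:ℝ)/p - 1) := by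
    intro u v hu hv hle j
    have h1 : u j ^ ((2:ℝ)/p - 1) ≤ (Real.exp δ * v j) ^ ((2:ℝ)/p - 1) :=
      Real.rpow_le_rpow (hu j).le (hle j) hnc0
    have h2 : (Real.exp δ * v j) ^ ((2:ℝ)/p - 1) = Real.exp γ * v j ^ ((2:ℝ)/p - 1) := by
      rw [Real.mul_rpow (Real.exp_pos _).le (hv j).le, ← Real.exp_mul]
      congr 2
      rw [hγ]; ring
    rw [h2] at h1
    exact h1
  have hwnc_le : ∀ j, w j ^ ((2:ℝ)/p - 1) ≤ Real.exp γ * τ j ^ ((2:ℝ)/p - 1) :=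
    hrpow_cmp' w τ hw hτpos hwle
  have hτnc_le : ∀ j, τ j ^ ((2:ℝ)/p - 1) ≤ Real.exp γ * w j ^ ((2:ℝ)/p - 1) :=
    hrpow_cmp' τ w hτpos hw hτle
  -- the Gram matrices
  set Bw := Aᵀ * Matrix.diagonal (fun j => w j ^ ((1:ℝ) - 2/p)) * A with hBwd
  set Bτ := Aᵀ * Matrix.diagonal (fun j => τ j ^ ((1:ℝ) - 2/p)) * A with hBτd
  have hBw : Bw.PosDef :=
    aux_B_posdef A hinj _ (fun j => Real.rpow_pos_of_pos (hw j) _)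
  have hBτ : Bτ.PosDef :=
    aux_B_posdef A hinj _ (fun j => Real.rpow_pos_of_pos (hτpos j) _)
  have hq1 : ∀ x, x ⬝ᵥ Bw *ᵥ x ≤ Real.exp γ * (x ⬝ᵥ Bτ *ᵥ x) := by
    intro x
    rw [hBwd, hBτd, aux_quadForm_eq, aux_quadForm_eq, Finset.mul_sum]
    apply Finset.sum_le_sum
    intro j _
    calc w j ^ ((1:ℝ) - 2/p) * (A *ᵥ x) j ^ 2
        ≤ (Real.exp γ * τ j ^ ((1:ℝ) - 2/p)) * (A *ᵥ x) j ^ 2 :=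
          mul_le_mul_of_nonneg_right (hwc_le j) (sq_nonneg _)
      _ = Real.exp γ * (τ j ^ ((1:ℝ) - 2/p) * (A *ᵥ x) j ^ 2) := by ring
  have hq2 : ∀ x, x ⬝ᵥ Bτ *ᵥ x ≤ Real.exp γ * (x ⬝ᵥ Bw *ᵥ x) := by
    intro x
    rw [hBwd, hBτd, aux_quadForm_eq, aux_quadForm_eq, Finset.mul_sum]
    apply Finset.sum_le_sum
    intro j _
    calc τ j ^ ((1:ℝ) - 2/p) * (A *ᵥ x) j ^ 2
        ≤ (Real.exp γ * w j ^ ((1:ℝ) - 2/p)) * (A *ᵥ x) j ^ 2 :=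
          mul_le_mul_of_nonneg_right (hτc_le j) (sq_nonneg _)
      _ = Real.exp γ * (w j ^ ((1:ℝ) - 2/p) * (A *ᵥ x) j ^ 2) := by ring
  have hqw_le : ∀ i, A i ⬝ᵥ Bw⁻¹ *ᵥ A i ≤ Real.exp γ * (A i ⬝ᵥ Bτ⁻¹ *ᵥ A i) :=
    fun i => aux_inv_quad_le hBτ hBw (Real.exp_pos _) hq2 (A i)
  have hqτ_le : ∀ i, A i ⬝ᵥ Bτ⁻¹ *ᵥ A i ≤ Real.exp γ * (A i ⬝ᵥ Bw⁻¹ *ᵥ A i) :=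
    fun i => aux_inv_quad_le hBw hBτ (Real.exp_pos _) hq1 (A i)
  -- key per-index log inequalities
  have hmix : ∀ (x : ℝ), 0 < x → x ^ ((1:ℝ) - 2/p) * x ^ ((2:ℝ)/p - 1) = 1 := by
    intro x hx
    rw [← Real.rpow_add hx]
    norm_num
  have hmul : ∀ (x : ℝ), 0 < x → x * x ^ ((2:ℝ)/p - 1) = x ^ ((2:ℝ)/p) := by
    intro x hx
    nth_rewrite 1 [← Real.rpow_one x]
    rw [← Real.rpow_add hx]
    congr 1
    ring
  have hup : ∀ i, (2/p) * Real.log (w i) ≤ (ε + γ) + (2/p) * Real.log (τ i) := by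
    intro i
    have hwa : w i ≤ Real.exp ε * (lev (scaled w p A) i + z i) := (hw_apx i).2
    rw [aux_lev_eq A p w hw i, ← hBwd] at hwa
    set Qw := A i ⬝ᵥ Bw⁻¹ *ᵥ A i with hQw
    set Qτ := A i ⬝ᵥ Bτ⁻¹ *ᵥ A i with hQτ
    have hpw : (0:ℝ) < w i ^ ((2:ℝ)/p - 1) := Real.rpow_pos_of_pos (hw i) _
    have h2 := mul_le_mul_of_nonneg_right hwa hpw.le
    rw [hmul (w i) (hw i)] at h2
    have h3 : Real.exp ε * (w i ^ ((1:ℝ) - 2/p) * Qw + z i) * w i ^ ((2:ℝ)/p - 1)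
        = Real.exp ε * (Qw + z i * w i ^ ((2:ℝ)/p - 1)) := by
      have := hmix (w i) (hw i)
      calc Real.exp ε * (w i ^ ((1:ℝ) - 2/p) * Qw + z i) * w i ^ ((2:ℝ)/p - 1)
          = Real.exp ε * ((w i ^ ((1:ℝ) - 2/p) * w i ^ ((2:ℝ)/p - 1)) * Qw
            + z i * w i ^ ((2:ℝ)/p - 1)) := by ring
        _ = Real.exp ε * (Qw + z i * w i ^ ((2:ℝ)/p - 1)) := by rw [this]; ring
    rw [h3] at h2
    have h4 : Qw + z i * w i ^ ((2:ℝ)/p - 1)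
        ≤ Real.exp γ * (Qτ + z i * τ i ^ ((2:ℝ)/p - 1)) := by
      have ha := hqw_le i
      have hb : z i * w i ^ ((2:ℝ)/p - 1) ≤ z i * (Real.exp γ * τ i ^ ((2:ℝ)/p - 1)) :=
        mul_le_mul_of_nonneg_left (hwnc_le i) (hz i).le
      rw [← hQw, ← hQτ] at ha
      calc Qw + z i * w i ^ ((2:ℝ)/p - 1)
          ≤ Real.exp γ * Qτ + z i * (Real.exp γ * τ i ^ ((2:ℝ)/p - 1)) := add_le_add ha hb
        _ = Real.exp γ * (Qτ + z i * τ i ^ ((2:ℝ)/p - 1)) := by ring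
    have h5 : Qτ + z i * τ i ^ ((2:ℝ)/p - 1) = τ i ^ ((2:ℝ)/p) := by
      have hτi : τ i = τ i ^ ((1:ℝ) - 2/p) * Qτ + z i := by
        have := hτ i
        rwa [aux_lev_eq A p τ hτpos i, ← hBτd, ← hQτ] at this
      have := hmix (τ i) (hτpos i)
      calc Qτ + z i * τ i ^ ((2:ℝ)/p - 1)
          = (τ i ^ ((1:ℝ) - 2/p) * Qτ + z i) * τ i ^ ((2:ℝ)/p - 1)
            - (τ i ^ ((1:ℝ) - 2/p) * τ i ^ ((2:ℝ)/p - 1)) * Qτ + Qτ := by ring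
        _ = τ i * τ i ^ ((2:ℝ)/p - 1) := by rw [this, ← hτi]; ring
        _ = τ i ^ ((2:ℝ)/p) := hmul (τ i) (hτpos i)
    have h6 : w i ^ ((2:ℝ)/p) ≤ Real.exp (ε + γ) * τ i ^ ((2:ℝ)/p) := by
      rw [Real.exp_add]
      calc w i ^ ((2:ℝ)/p) ≤ Real.exp ε * (Qw + z i * w i ^ ((2:ℝ)/p - 1)) := h2
        _ ≤ Real.exp ε * (Real.exp γ * (Qτ + z i * τ i ^ ((2:ℝ)/p - 1))) :=
            mul_le_mul_of_nonneg_left h4 (Real.exp_pos _).le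
        _ = Real.exp ε * Real.exp γ * τ i ^ ((2:ℝ)/p) := by rw [h5]; ring
    have h7 := Real.log_le_log (Real.rpow_pos_of_pos (hw i) _) h6
    rw [Real.log_rpow (hw i), Real.log_mul (Real.exp_ne_zero _)
      (Real.rpow_pos_of_pos (hτpos i) _).ne', Real.log_exp,
      Real.log_rpow (hτpos i)] at h7
    linarith
  have hlow : ∀ i, -(ε + γ) + (2/p) * Real.log (τ i) ≤ (2/p) * Real.log (w i) := by
    intro i
    have hwa : Real.exp (-ε) * (lev (scaled w p A) i + z i) ≤ w i := (hw_apx i).1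
    rw [aux_lev_eq A p w hw i, ← hBwd] at hwa
    set Qw := A i ⬝ᵥ Bw⁻¹ *ᵥ A i with hQw
    set Qτ := A i ⬝ᵥ Bτ⁻¹ *ᵥ A i with hQτ
    have hpw : (0:ℝ) < w i ^ ((2:ℝ)/p - 1) := Real.rpow_pos_of_pos (hw i) _
    have h2 := mul_le_mul_of_nonneg_right hwa hpw.le
    rw [hmul (w i) (hw i)] at h2
    have h3 : Real.exp (-ε) * (w i ^ ((1:ℝ) - 2/p) * Qw + z i) * w i ^ ((2:ℝ)/p - 1)
        = Real.exp (-ε) * (Qw + z i * w i ^ ((2:ℝ)/p - 1)) := by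
      have := hmix (w i) (hw i)
      calc Real.exp (-ε) * (w i ^ ((1:ℝ) - 2/p) * Qw + z i) * w i ^ ((2:ℝ)/p - 1)
          = Real.exp (-ε) * ((w i ^ ((1:ℝ) - 2/p) * w i ^ ((2:ℝ)/p - 1)) * Qw
            + z i * w i ^ ((2:ℝ)/p - 1)) := by ring
        _ = Real.exp (-ε) * (Qw + z i * w i ^ ((2:ℝ)/p - 1)) := by rw [this]; ring
    rw [h3] at h2
    -- lower bounds : exp(-γ) * (...) ≤ Qw + z * w^(2/p-1)
    have h4 : Real.exp (-γ) * (Qτ + z i * τ i ^ ((2:ℝ)/p - 1))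
        ≤ Qw + z i * w i ^ ((2:ℝ)/p - 1) := by
      have ha := hqτ_le i
      rw [← hQw, ← hQτ] at ha
      have ha' : Real.exp (-γ) * Qτ ≤ Qw := by
        have := mul_le_mul_of_nonneg_left ha (Real.exp_pos (-γ)).le
        rw [← mul_assoc, ← Real.exp_add] at this
        simpa using this
      have hb : Real.exp (-γ) * (z i * τ i ^ ((2:ℝ)/p - 1)) ≤ z i * w i ^ ((2:ℝ)/p - 1) := by
        have hb1 := mul_le_mul_of_nonneg_left (hτnc_le i) (hz i).le
        have := mul_le_mul_of_nonneg_left hb1 (Real.exp_pos (-γ)).le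
        calc Real.exp (-γ) * (z i * τ i ^ ((2:ℝ)/p - 1))
            ≤ Real.exp (-γ) * (z i * (Real.exp γ * w i ^ ((2:ℝ)/p - 1))) := this
          _ = (Real.exp (-γ) * Real.exp γ) * (z i * w i ^ ((2:ℝ)/p - 1)) := by ring
          _ = z i * w i ^ ((2:ℝ)/p - 1) := by rw [← Real.exp_add]; simp
      calc Real.exp (-γ) * (Qτ + z i * τ i ^ ((2:ℝ)/p - 1))
          = Real.exp (-γ) * Qτ + Real.exp (-γ) * (z i * τ i ^ ((2:ℝ)/p - 1)) := by ring
        _ ≤ Qw + z i * w i ^ ((2:ℝ)/p - 1) := add_le_add ha' hb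
    have h5 : Qτ + z i * τ i ^ ((2:ℝ)/p - 1) = τ i ^ ((2:ℝ)/p) := by
      have hτi : τ i = τ i ^ ((1:ℝ) - 2/p) * Qτ + z i := by
        have := hτ i
        rwa [aux_lev_eq A p τ hτpos i, ← hBτd, ← hQτ] at this
      have := hmix (τ i) (hτpos i)
      calc Qτ + z i * τ i ^ ((2:ℝ)/p - 1)
          = (τ i ^ ((1:ℝ) - 2/p) * Qτ + z i) * τ i ^ ((2:ℝ)/p - 1)
            - (τ i ^ ((1:ℝ) - 2/p) * τ i ^ ((2:ℝ)/p - 1)) * Qτ + Qτ := by ring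
        _ = τ i * τ i ^ ((2:ℝ)/p - 1) := by rw [this, ← hτi]; ring
        _ = τ i ^ ((2:ℝ)/p) := hmul (τ i) (hτpos i)
    have h6 : Real.exp (-(ε + γ)) * τ i ^ ((2:ℝ)/p) ≤ w i ^ ((2:ℝ)/p) := by
      have := mul_le_mul_of_nonneg_left h4 (Real.exp_pos (-ε)).le
      calc Real.exp (-(ε + γ)) * τ i ^ ((2:ℝ)/p)
          = Real.exp (-ε) * (Real.exp (-γ) * (Qτ + z i * τ i ^ ((2:ℝ)/p - 1))) := by
            rw [h5, ← mul_assoc, ← Real.exp_add]; ring_nf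
        _ ≤ Real.exp (-ε) * (Qw + z i * w i ^ ((2:ℝ)/p - 1)) := this
        _ ≤ w i ^ ((2:ℝ)/p) := h2
    have h7 := Real.log_le_log (mul_pos (Real.exp_pos _)
      (Real.rpow_pos_of_pos (hτpos i) _)) h6
    rw [Real.log_rpow (hw i), Real.log_mul (Real.exp_ne_zero _)
      (Real.rpow_pos_of_pos (hτpos i) _).ne', Real.log_exp,
      Real.log_rpow (hτpos i)] at h7
    linarith
  -- conclude δ ≤ ε
  obtain ⟨i₀, -, hi₀⟩ := Finset.exists_mem_eq_sup' hne L
  have hδε : δ ≤ ε := by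
    have h1 := hup i₀
    have h2 := hlow i₀
    have hδL : δ = |Real.log (w i₀) - Real.log (τ i₀)| := hi₀
    rcases abs_cases (Real.log (w i₀) - Real.log (τ i₀)) with ⟨habs, -⟩ | ⟨habs, -⟩ <;>
      rw [habs] at hδL <;> rw [hγ] at h1 h2 <;> nlinarith [h2p0]
  -- finish
  intro i
  constructor
  · calc Real.exp (-ε) * τ i ≤ Real.exp (-δ) * τ i :=
        mul_le_mul_of_nonneg_right (Real.exp_le_exp.mpr (by linarith)) (hτpos i).le
      _ ≤ w i := hwge i
  · calc w i ≤ Real.exp δ * τ i := hwle i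
      _ ≤ Real.exp ε * τ i :=
        mul_le_mul_of_nonneg_right (Real.exp_le_exp.mpr hδε) (hτpos i).le
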